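/- For every n ≥ 0, the number of Dyck n-paths whose terminal descent has even length equals the number of hill-free Dyck n-paths (paths with no UD occurrence starting at ground level). -/

import Mathlib

inductive Step : Type
  | U : Step
  | D : Step
deriving DecidableEq

open Step

/-- The path stays weakly above ground level: every prefix has at least as many `U`s as `D`s. -/
def NonnegPrefixes (p : List Step) : Prop :=
  ∀ q : List Step, q <+: p → q.count D ≤ q.count U

/-- A Dyck path: equally many upsteps and downsteps, never dipping below ground level. -/
def IsDyck (p : List Step) : Prop :=
  p.count U = p.count D ∧ NonnegPrefixes p

/-- A Dyck `n`-path: a Dyck path with `n` upsteps (semilength `n`). -/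
def IsDyckN (n : ℕ) (p : List Step) : Prop :=
  IsDyck p ∧ p.count U = n

/-- Length of the terminal descent (maximal final run of downsteps). -/
def termDesc (p : List Step) : ℕ :=
  (p.reverse.takeWhile (fun s => s == D)).length

/-- Number of returns: downsteps that bring the path back to ground level. -/
def returnCount (p : List Step) : ℕ :=
  ((List.range p.length).filter
    (fun i => (p.take (i+1)).count U == (p.take (i+1)).count D)).length

/-- `GroundDescent p q m r` : `p = q ++ D^m ++ r` is a maximal run of `m ≥ 1` downsteps
ending at ground level. -/
def GroundDescent (p q : List Step) (m : ℕ) (r : List Step) : Prop :=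
  p = q ++ List.replicate m D ++ r ∧ 1 ≤ m ∧
  q.getLast? ≠ some D ∧ r.head? ≠ some D ∧
  q.count U = q.count D + m

/-- All descents to ground level other than the terminal one have odd length. -/
def OddNonterminalGroundDescents (p : List Step) : Prop :=
  ∀ q m r, GroundDescent p q m r → r ≠ [] → Odd m

/-- No occurrence of `UD` starting at ground level. -/
def HillFree (p : List Step) : Prop :=
  ∀ q r : List Step, p = q ++ [U, D] ++ r → q.count U ≠ q.count D

/-- No occurrence of `UDU` starting at ground level. -/
def EarlyHillFree (p : List Step) : Prop :=
  ∀ q r : List Step, p = q ++ [U, D, U] ++ r → q.count U ≠ q.count D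

/-- Number of early hills: occurrences of `UDU` starting at ground level. -/
def earlyHillCount (p : List Step) : ℕ :=
  ((List.range p.length).filter
    (fun i => decide ((p.take i).count U = (p.take i).count D ∧
      (p.drop i).take 3 = [U, D, U]))).length

instance : Fintype Step := ⟨{U, D}, fun x => by cases x <;> simp⟩

lemma step_cases (s : Step) : s = U ∨ s = D := by cases s <;> simp

lemma list_length_eq (p : List Step) : p.length = p.count U + p.count D := by
  induction p with
  | nil => simp
  | cons a l ih => cases a <;> simp [List.count_cons, ih] <;> omega

lemma isDyckN_length {n : ℕ} {p : List Step} (h : IsDyckN n p) : p.length = 2 * n := by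
  have := list_length_eq p
  have h1 := h.1.1
  have h2 := h.2
  omega

lemma isDyckN_zero {p : List Step} (h : IsDyckN 0 p) : p = [] := by
  have := isDyckN_length h
  simpa [List.length_eq_zero_iff] using this

lemma isDyck_nil : IsDyck ([] : List Step) := by
  constructor
  · simp
  · intro q hq
    simp [List.prefix_nil.mp hq]

lemma dyck_ne_nil_mem_U {s : List Step} (h : IsDyck s) (hne : s ≠ []) : U ∈ s := by
  rw [← List.count_pos_iff]
  by_contra hc
  push_neg at hc
  have h0 : s.count U = 0 := by omega
  have := list_length_eq s
  have h1 := h.1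
  have : s.length = 0 := by omega
  exact hne (List.length_eq_zero_iff.mp this)

lemma prefix_append_cases {α : Type*} {l a b : List α} (h : l <+: a ++ b) :
    l <+: a ∨ ∃ r, r <+: b ∧ l = a ++ r := by
  rcases le_or_gt l.length a.length with hl | hl
  · exact Or.inl (List.prefix_of_prefix_length_le h (a.prefix_append b) hl)
  · right
    have ha : a <+: l := List.prefix_of_prefix_length_le (a.prefix_append b) h hl.le
    obtain ⟨r, rfl⟩ := ha
    exact ⟨r, (List.prefix_append_right_inj a).mp h, rfl⟩

lemma isDyckN_arch {k m : ℕ} {t s : List Step} (ht : IsDyckN k t) (hs : IsDyckN m s) :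
    IsDyckN (k + m + 1) (U :: (t ++ D :: s)) := by
  obtain ⟨⟨htc, htp⟩, htk⟩ := ht
  obtain ⟨⟨hsc, hsp⟩, hsk⟩ := hs
  refine ⟨⟨?_, ?_⟩, ?_⟩
  · simp [List.count_cons, List.count_append]
    omega
  · intro q hq
    rcases q with _ | ⟨a, q⟩
    · simp
    · obtain ⟨rfl, hq2⟩ := List.cons_prefix_cons.mp hq
      rcases prefix_append_cases hq2 with hq3 | ⟨r, hr, rfl⟩
      · have := htp q hq3
        simp [List.count_cons]
        omega
      · rcases r with _ | ⟨b, r⟩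
        · have := htp t (List.prefix_refl t)
          simp [List.count_cons, List.count_append]
          omega
        · obtain ⟨rfl, hr2⟩ := List.cons_prefix_cons.mp hr
          have := hsp r hr2
          simp [List.count_cons, List.count_append]
          omega
  · simp [List.count_cons, List.count_append]
    omega

lemma dyck_decomp_unique {t t' s s' : List Step} (ht : IsDyck t) (ht' : IsDyck t')
    (h : t ++ D :: s = t' ++ D :: s') : t = t' ∧ s = s' := by
  have key : ∀ a a' b b' : List Step, IsDyck a → IsDyck a' → a.length ≤ a'.length →
      a ++ D :: b = a' ++ D :: b' → a = a' := by
    intro a a' b b' ha ha' hlen heq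
    have hpa : a <+: a' ++ D :: b' := heq ▸ a.prefix_append (D :: b)
    have hpa' : a <+: a' := by
      apply List.prefix_of_prefix_length_le hpa (a'.prefix_append (D :: b')) hlen
    obtain ⟨u, rfl⟩ := hpa'
    rcases u with _ | ⟨x, u⟩
    · simp
    · exfalso
      rw [List.append_assoc] at heq
      have h2 : D :: b = x :: (u ++ D :: b') := List.append_cancel_left heq
      obtain ⟨rfl, -⟩ := List.cons_eq_cons.mp h2
      have hpre : a ++ [D] <+: a ++ D :: u := ⟨u, by simp⟩
      have := ha'.2 _ hpre
      have hca := ha.1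
      simp [List.count_append] at this
      omega
  rcases le_or_gt t.length t'.length with hl | hl
  · have heq := key t t' s s' ht ht' hl h
    subst heq
    exact ⟨rfl, by simpa using List.append_cancel_left h⟩
  · have heq := key t' t s' s ht' ht hl.le h.symm
    subst heq
    exact ⟨rfl, by simpa using List.append_cancel_left h⟩

-- takeWhile helpers
lemma takeWhile_append_single {α : Type*} (p : α → Bool) (l : List α) (x : α) (hx : p x = false) :
    (l ++ [x]).takeWhile p = l.takeWhile p := by
  induction l with
  | nil => simp [List.takeWhile, hx]
  | cons a l ih =>
    by_cases hpa : p a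
    · simp [List.takeWhile_cons, hpa, ih]
    · simp [List.takeWhile_cons, hpa]

lemma takeWhile_append_of_false {α : Type*} (p : α → Bool) (l₁ l₂ : List α) (x : α)
    (hx : x ∈ l₁) (hpx : p x = false) : (l₁ ++ l₂).takeWhile p = l₁.takeWhile p := by
  induction l₁ with
  | nil => simp at hx
  | cons a l ih =>
    by_cases hpa : p a
    · rcases List.mem_cons.mp hx with rfl | hx'
      · simp [hpa] at hpx
      · simp [List.takeWhile_cons, hpa, ih hx']
    · simp [List.takeWhile_cons, hpa]

lemma termDesc_arch (t : List Step) : termDesc (U :: (t ++ [D])) = termDesc t + 1 := by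
  have h1 : (U :: (t ++ [D])).reverse = D :: (t.reverse ++ [U]) := by simp
  rw [termDesc, h1]
  rw [List.takeWhile_cons]
  simp only [show ((D == D) = true) from rfl, if_true]
  rw [takeWhile_append_single _ _ U (by rfl)]
  simp [termDesc]

lemma termDesc_append {q s : List Step} (h : U ∈ s) : termDesc (q ++ s) = termDesc s := by
  rw [termDesc, List.reverse_append]
  rw [takeWhile_append_of_false _ _ _ U (by simpa using h) (by rfl)]
  rfl

lemma hillFree_nil : HillFree ([] : List Step) := by
  intro q r h
  exact absurd h (by simp)

lemma hillFree_iff {t s : List Step} (ht : IsDyck t) (hs : IsDyck s) :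
    HillFree (U :: (t ++ D :: s)) ↔ t ≠ [] ∧ HillFree s := by
  constructor
  · intro h
    constructor
    · rintro rfl
      exact h [] s (by simp) rfl
    · intro q r heq hcq
      apply h (U :: (t ++ D :: q)) r
      · rw [heq]; simp
      · simp [List.count_cons, List.count_append, ht.1]
        omega
  · rintro ⟨htne, hhf⟩ q r heq hcq
    rcases q with _ | ⟨x, q⟩
    · simp only [List.nil_append, List.cons_append] at heq
      obtain ⟨-, h2⟩ := List.cons_eq_cons.mp heq
      rcases t with _ | ⟨a, t'⟩
      · exact htne rfl
      · obtain ⟨rfl, -⟩ := List.cons_eq_cons.mp h2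
        have := ht.2 [D] ⟨t', rfl⟩
        simp at this
    · have hx : x = U := by
        have : x :: (q ++ [U, D] ++ r) = U :: (t ++ D :: s) := by
          rw [heq]; simp
        exact (List.cons_eq_cons.mp this.symm).1.symm
      subst hx
      have hq : q ++ [U, D] ++ r = t ++ D :: s := by
        have : U :: (q ++ [U, D] ++ r) = U :: (t ++ D :: s) := by rw [heq]; simp
        exact (List.cons_eq_cons.mp this).2
      simp [List.count_cons] at hcq
      -- compare q and t
      have hqpre : q <+: t ++ D :: s := ⟨[U, D] ++ r, by rw [← hq]; simp⟩
      rcases le_or_gt q.length t.length with hl | hl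
      · have : q <+: t := List.prefix_of_prefix_length_le hqpre (t.prefix_append _) hl
        have := ht.2 q this
        omega
      · have htq : t <+: q := List.prefix_of_prefix_length_le (t.prefix_append (D :: s))
          hqpre hl.le
        obtain ⟨u, rfl⟩ := htq
        rw [List.append_assoc, List.append_assoc] at hq
        have hu : u ++ ([U, D] ++ r) = D :: s := List.append_cancel_left hq
        rcases u with _ | ⟨y, u'⟩
        · simp at hu
        · have hy : y = D := (List.cons_eq_cons.mp (by simpa using hu)).1
          subst hy
          have hu' : u' ++ [U, D] ++ r = s := by
            simpa [List.append_assoc] using hu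
          apply hhf u' r hu'.symm
          simp [List.count_append, List.count_cons] at hcq ⊢
          have := ht.1
          omega

lemma dyck_decomp {p : List Step} (h : IsDyck p) (hne : p ≠ []) :
    ∃ t s, IsDyck t ∧ IsDyck s ∧ p = U :: (t ++ D :: s) := by
  classical
  have hlp : 0 < p.length := List.length_pos_iff.mpr hne
  have hex : ∃ i, 1 ≤ i ∧ (p.take i).count U = (p.take i).count D :=
    ⟨p.length, by omega, by rw [List.take_length]; exact h.1⟩
  obtain ⟨a, q, rfl⟩ := List.exists_cons_of_ne_nil hne
  have ha : a = U := by
    rcases step_cases a with rfl | rfl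
    · rfl
    · have := h.2 [D] ⟨q, rfl⟩
      simp at this
  subst ha
  set p := U :: q with hpdef
  set i := Nat.find hex with hidef
  obtain ⟨hi1, hibal⟩ := Nat.find_spec hex
  have hile : i ≤ p.length := Nat.find_min' hex ⟨by omega, by rw [List.take_length]; exact h.1⟩
  have hw : p.take i = U :: q.take (i-1) := by
    conv_lhs => rw [show i = (i-1)+1 from by omega]
    simp [hpdef]
  have hw1ne : q.take (i-1) ≠ [] := by
    intro hnil
    rw [hw, hnil] at hibal
    simp at hibal
  rw [← hidef] at hibal
  rcases List.eq_nil_or_concat (q.take (i-1)) with hnil | ⟨w2, x, hw1⟩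
  · exact absurd hnil hw1ne
  rw [List.concat_eq_append] at hw1
  rcases step_cases x with rfl | rfl
  · -- last step U: impossible
    exfalso
    rw [hw, hw1] at hibal
    have hpre : U :: w2 <+: p := by
      have h1 : U :: w2 <+: p.take i := by
        rw [hw, hw1]
        exact List.cons_prefix_cons.mpr ⟨rfl, w2.prefix_append [U]⟩
      exact h1.trans (List.take_prefix i p)
    have := h.2 (U :: w2) hpre
    simp [List.count_cons, List.count_append] at this hibal
    omega
  · -- last step D: decompose
    have hwfull : p.take i = U :: (w2 ++ [D]) := by rw [hw, hw1]
    have hbal2 : w2.count U = w2.count D := by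
      rw [hwfull] at hibal
      simp [List.count_cons, List.count_append] at hibal
      omega
    have htd : IsDyck w2 := by
      refine ⟨hbal2, ?_⟩
      intro r hr
      have hj1 : r.length ≤ w2.length := hr.length_le
      have hlen2 : w2.length + 2 = i := by
        have := congrArg List.length hwfull
        simp [List.length_take] at this
        omega
      have hpre : U :: r <+: p := by
        have h1 : U :: r <+: p.take i := by
          rw [hwfull]
          exact List.cons_prefix_cons.mpr ⟨rfl, hr.trans (w2.prefix_append [D])⟩
        exact h1.trans (List.take_prefix i p)
      have htake : p.take (r.length + 1) = U :: r := by
        have := List.prefix_iff_eq_take.mp hpre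
        simpa using this.symm
      have hmin := Nat.find_min hex (show r.length + 1 < i by omega)
      push_neg at hmin
      have hne2 := hmin (by omega)
      rw [htake] at hne2
      have hnn := h.2 (U :: r) hpre
      simp [List.count_cons] at hne2 hnn
      omega
    have hsd : IsDyck (p.drop i) := by
      constructor
      · have hcU : p.count U = (p.take i).count U + (p.drop i).count U := by
          rw [← List.count_append, List.take_append_drop]
        have hcD : p.count D = (p.take i).count D + (p.drop i).count D := by
          rw [← List.count_append, List.take_append_drop]
        have hcount := h.1
        omega
      · intro r hr
        have hpre : p.take i ++ r <+: p := by
          have h1 : p.take i ++ r <+: p.take i ++ p.drop i :=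
            (List.prefix_append_right_inj (p.take i)).mpr hr
          rwa [List.take_append_drop] at h1
        have := h.2 _ hpre
        simp [List.count_append, hibal] at this
        omega
    refine ⟨w2, p.drop i, htd, hsd, ?_⟩
    conv_lhs => rw [← List.take_append_drop i p]
    rw [hwfull]
    simp

instance instFiniteDyckP (n : ℕ) (P : List Step → Prop) :
    Finite {p : List Step // IsDyckN n p ∧ P p} := by
  have : Set.Finite {p : List Step | IsDyckN n p ∧ P p} := by
    apply Set.Finite.subset (List.finite_length_eq Step (2 * n))
    intro p hp
    exact isDyckN_length hp.1
  exact this.to_subtype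

instance instFiniteDyck (n : ℕ) : Finite {p : List Step // IsDyckN n p} := by
  have : Set.Finite {p : List Step | IsDyckN n p} := by
    apply Set.Finite.subset (List.finite_length_eq Step (2 * n))
    intro p hp
    exact isDyckN_length hp
  exact this.to_subtype

lemma nat_card_sigma {n : ℕ} (f : Fin n → Type*) [∀ i, Finite (f i)] :
    Nat.card (Σ i, f i) = ∑ i, Nat.card (f i) := by
  letI : ∀ i, Fintype (f i) := fun i => Fintype.ofFinite _
  simp [Nat.card_eq_fintype_card, Fintype.card_sigma]

lemma card_decomp (n : ℕ) (P : List Step → Prop) (R Q : ℕ → List Step → Prop)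
    (hPQ : ∀ k : ℕ, k ≤ n → ∀ t s, IsDyckN k t → IsDyckN (n - k) s →
      (P (U :: (t ++ D :: s)) ↔ R k t ∧ Q k s)) :
    Nat.card {p : List Step // IsDyckN (n+1) p ∧ P p} =
      ∑ k : Fin (n+1), Nat.card {t : List Step // IsDyckN k t ∧ R k t} *
        Nat.card {s : List Step // IsDyckN (n - k) s ∧ Q k s} := by
  classical
  have hg : ∀ (x : Σ k : Fin (n+1), {t : List Step // IsDyckN k t ∧ R k t} ×
      {s : List Step // IsDyckN (n - k) s ∧ Q k s}),
      IsDyckN (n+1) (U :: (x.2.1.1 ++ D :: x.2.2.1)) ∧ P (U :: (x.2.1.1 ++ D :: x.2.2.1)) := by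
    rintro ⟨k, ⟨t, htd, htr⟩, ⟨s, hsd, hsq⟩⟩
    have hk : (k : ℕ) ≤ n := Nat.lt_succ_iff.mp k.2
    constructor
    · have := isDyckN_arch htd hsd
      rwa [show (k : ℕ) + (n - (k : ℕ)) + 1 = n + 1 by omega] at this
    · exact (hPQ k hk t s htd hsd).mpr ⟨htr, hsq⟩
  let g : (Σ k : Fin (n+1), {t : List Step // IsDyckN k t ∧ R k t} ×
      {s : List Step // IsDyckN (n - k) s ∧ Q k s}) →
      {p : List Step // IsDyckN (n+1) p ∧ P p} :=
    fun x => ⟨U :: (x.2.1.1 ++ D :: x.2.2.1), hg x⟩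
  have hbij : Function.Bijective g := by
    constructor
    · rintro ⟨k, ⟨t, htd, htr⟩, ⟨s, hsd, hsq⟩⟩ ⟨k', ⟨t', htd', htr'⟩, ⟨s', hsd', hsq'⟩⟩ heq
      simp only [g, Subtype.mk.injEq, List.cons.injEq, true_and] at heq
      obtain ⟨ht, hs⟩ := dyck_decomp_unique htd.1 htd'.1 heq
      subst ht; subst hs
      have hkk : k = k' := Fin.ext (by rw [← htd.2, ← htd'.2])
      subst hkk
      rfl
    · rintro ⟨p, hp, hP⟩
      have hpne : p ≠ [] := by
        intro hnil
        rw [hnil] at hp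
        have := hp.2
        simp at this
      obtain ⟨t, s, htd, hsd, rfl⟩ := dyck_decomp hp.1 hpne
      have hcnt : t.count U + s.count U + 1 = n + 1 := by
        have := hp.2
        simp [List.count_cons, List.count_append] at this
        omega
      have hk : t.count U ≤ n := by omega
      have htN : IsDyckN (t.count U) t := ⟨htd, rfl⟩
      have hsN : IsDyckN (n - t.count U) s := ⟨hsd, by omega⟩
      obtain ⟨hR, hQ⟩ := (hPQ (t.count U) hk t s htN hsN).mp hP
      exact ⟨⟨⟨t.count U, by omega⟩, ⟨t, htN, hR⟩, ⟨s, hsN, hQ⟩⟩, rfl⟩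
  rw [← Nat.card_congr (Equiv.ofBijective g hbij)]
  rw [nat_card_sigma]
  exact Finset.sum_congr rfl fun k _ => Nat.card_prod _ _

lemma card_zero (P : List Step → Prop) (h : P []) :
    Nat.card {p : List Step // IsDyckN 0 p ∧ P p} = 1 := by
  haveI : Unique {p : List Step // IsDyckN 0 p ∧ P p} :=
    { default := ⟨[], ⟨⟨isDyck_nil, rfl⟩, h⟩⟩
      uniq := fun x => Subtype.ext (isDyckN_zero x.2.1) }
  exact Nat.card_unique

lemma card_split (n : ℕ) :
    Nat.card {p : List Step // IsDyckN n p ∧ Even (termDesc p)} +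
      Nat.card {p : List Step // IsDyckN n p ∧ ¬ Even (termDesc p)} =
    Nat.card {p : List Step // IsDyckN n p} := by
  classical
  have e1 : {p : List Step // IsDyckN n p ∧ Even (termDesc p)} ≃
      {x : {p : List Step // IsDyckN n p} // Even (termDesc x.1)} :=
    (Equiv.subtypeSubtypeEquivSubtypeInter _ _).symm
  have e2 : {p : List Step // IsDyckN n p ∧ ¬ Even (termDesc p)} ≃
      {x : {p : List Step // IsDyckN n p} // ¬ Even (termDesc x.1)} :=
    (Equiv.subtypeSubtypeEquivSubtypeInter _ _).symm
  calc Nat.card {p : List Step // IsDyckN n p ∧ Even (termDesc p)} +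
      Nat.card {p : List Step // IsDyckN n p ∧ ¬ Even (termDesc p)}
      = Nat.card ({p : List Step // IsDyckN n p ∧ Even (termDesc p)} ⊕
        {p : List Step // IsDyckN n p ∧ ¬ Even (termDesc p)}) := (Nat.card_sum).symm
    _ = Nat.card {p : List Step // IsDyckN n p} :=
        Nat.card_congr ((e1.sumCongr e2).trans (Equiv.sumCompl _))

lemma sum_swap_helper (n : ℕ) (F G : ℕ → ℕ) (hn : 0 < n)
    (hmid : ∀ k, 0 < k → k < n → F k = G k)
    (hends : F 0 + F n = G 0 + G n) :
    ∑ k ∈ Finset.range (n+1), F k = ∑ k ∈ Finset.range (n+1), G k := by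
  obtain ⟨m, rfl⟩ : ∃ m, n = m + 1 := ⟨n-1, by omega⟩
  rw [Finset.sum_range_succ' F, Finset.sum_range_succ' G,
      Finset.sum_range_succ (fun k => F (k+1)), Finset.sum_range_succ (fun k => G (k+1))]
  have hmm : ∑ k ∈ Finset.range m, F (k+1) = ∑ k ∈ Finset.range m, G (k+1) :=
    Finset.sum_congr rfl fun k hk =>
      hmid (k+1) (by omega) (by have := Finset.mem_range.mp hk; omega)
  omega


/-- For every `n ≥ 0`, Dyck `n`-paths with even-length terminal descent are equinumerous
with hill-free Dyck `n`-paths. -/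
theorem stmt2 (n : ℕ) :
    Nat.card {p : List Step // IsDyckN n p ∧ Even (termDesc p)} =
    Nat.card {p : List Step // IsDyckN n p ∧ HillFree p} := by
  induction n using Nat.strong_induction_on with
  | _ n ih =>
    match n, ih with
    | 0, _ =>
      rw [card_zero _ (show Even (termDesc ([] : List Step)) by simp [termDesc]),
        card_zero _ hillFree_nil]
    | Nat.succ n, ih =>
      have hA : ∀ k : ℕ, k ≤ n → ∀ t s, IsDyckN k t → IsDyckN (n - k) s →
          (Even (termDesc (U :: (t ++ D :: s))) ↔
            (if k = n then ¬ Even (termDesc t) else True) ∧ Even (termDesc s)) := by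
        intro k hk t s ht hs
        by_cases hkn : k = n
        · subst hkn
          have hs0 : s = [] := isDyckN_zero (by simpa using hs)
          subst hs0
          rw [show (U :: (t ++ D :: ([] : List Step))) = U :: (t ++ [D]) from rfl,
            termDesc_arch, Nat.even_add_one]
          simp [termDesc]
        · have hkn' : k < n := lt_of_le_of_ne hk hkn
          have hsne : s ≠ [] := by
            intro h0
            subst h0
            have := hs.2
            simp at this
            omega
          have hU : U ∈ s := dyck_ne_nil_mem_U hs.1 hsne
          rw [show U :: (t ++ D :: s) = (U :: (t ++ [D])) ++ s by simp, termDesc_append hU]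
          simp [hkn]
      have hB : ∀ k : ℕ, k ≤ n → ∀ t s, IsDyckN k t → IsDyckN (n - k) s →
          (HillFree (U :: (t ++ D :: s)) ↔ (0 < k) ∧ HillFree s) := by
        intro k hk t s ht hs
        rw [hillFree_iff ht.1 hs.1]
        constructor
        · rintro ⟨htne, hf⟩
          refine ⟨?_, hf⟩
          rcases Nat.eq_zero_or_pos k with rfl | h
          · exact absurd (isDyckN_zero ht) htne
          · exact h
        · rintro ⟨hpos, hf⟩
          refine ⟨?_, hf⟩
          intro h0
          subst h0
          have := ht.2
          simp at this
          omega
      rw [card_decomp n _ _ _ hA, card_decomp n _ _ _ hB]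
      have hc1 : (∑ k : Fin (n+1), Nat.card {t : List Step // IsDyckN k t ∧
            (if (k : ℕ) = n then ¬ Even (termDesc t) else True)} *
          Nat.card {s : List Step // IsDyckN (n - (k : ℕ)) s ∧ Even (termDesc s)}) =
          ∑ k ∈ Finset.range (n+1), Nat.card {t : List Step // IsDyckN k t ∧
            (if k = n then ¬ Even (termDesc t) else True)} *
          Nat.card {s : List Step // IsDyckN (n - k) s ∧ Even (termDesc s)} :=
        Fin.sum_univ_eq_sum_range
          (fun k => Nat.card {t : List Step // IsDyckN k t ∧
            (if k = n then ¬ Even (termDesc t) else True)} *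
          Nat.card {s : List Step // IsDyckN (n - k) s ∧ Even (termDesc s)}) (n+1)
      have hc2 : (∑ k : Fin (n+1), Nat.card {t : List Step // IsDyckN k t ∧ 0 < (k : ℕ)} *
          Nat.card {s : List Step // IsDyckN (n - (k : ℕ)) s ∧ HillFree s}) =
          ∑ k ∈ Finset.range (n+1), Nat.card {t : List Step // IsDyckN k t ∧ 0 < k} *
          Nat.card {s : List Step // IsDyckN (n - k) s ∧ HillFree s} :=
        Fin.sum_univ_eq_sum_range
          (fun k => Nat.card {t : List Step // IsDyckN k t ∧ 0 < k} *
          Nat.card {s : List Step // IsDyckN (n - k) s ∧ HillFree s}) (n+1)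
      rw [hc1, hc2]
      rcases Nat.eq_zero_or_pos n with rfl | hn
      · rw [Finset.sum_range_one, Finset.sum_range_one]
        have h1 : Nat.card {t : List Step // IsDyckN 0 t ∧
            (if (0 : ℕ) = 0 then ¬ Even (termDesc t) else True)} = 0 := by
          haveI : IsEmpty {t : List Step // IsDyckN 0 t ∧
              (if (0 : ℕ) = 0 then ¬ Even (termDesc t) else True)} := by
            refine ⟨fun x => ?_⟩
            have h2 := x.2.2
            rw [if_pos rfl] at h2
            exact h2 (by rw [isDyckN_zero x.2.1]; simp [termDesc])
          exact Nat.card_of_isEmpty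
        have h2 : Nat.card {t : List Step // IsDyckN 0 t ∧ 0 < 0} = 0 := by
          haveI : IsEmpty {t : List Step // IsDyckN 0 t ∧ 0 < 0} :=
            ⟨fun x => absurd x.2.2 (lt_irrefl 0)⟩
          exact Nat.card_of_isEmpty
        rw [h1, h2]
        simp
      · apply sum_swap_helper n _ _ hn
        · intro k hk0 hkn
          have e1 : Nat.card {t : List Step // IsDyckN k t ∧
              (if k = n then ¬ Even (termDesc t) else True)} =
              Nat.card {t : List Step // IsDyckN k t ∧ 0 < k} :=
            Nat.card_congr (Equiv.subtypeEquivRight fun t => by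
              simp [Nat.ne_of_lt hkn, hk0])
          rw [e1, ih (n - k) (by omega)]
        · have hF0 : Nat.card {t : List Step // IsDyckN 0 t ∧
              (if (0 : ℕ) = n then ¬ Even (termDesc t) else True)} = 1 := by
            have e1 : Nat.card {t : List Step // IsDyckN 0 t ∧
                (if (0 : ℕ) = n then ¬ Even (termDesc t) else True)} =
                Nat.card {t : List Step // IsDyckN 0 t ∧ True} :=
              Nat.card_congr (Equiv.subtypeEquivRight fun t => by
                simp [Nat.ne_of_lt hn])
            rw [e1, card_zero _ trivial]
          have hFn : Nat.card {t : List Step // IsDyckN n t ∧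
              (if n = n then ¬ Even (termDesc t) else True)} =
              Nat.card {t : List Step // IsDyckN n t ∧ ¬ Even (termDesc t)} :=
            Nat.card_congr (Equiv.subtypeEquivRight fun t => by simp)
          have hG0 : Nat.card {t : List Step // IsDyckN 0 t ∧ 0 < 0} = 0 := by
            haveI : IsEmpty {t : List Step // IsDyckN 0 t ∧ 0 < 0} :=
              ⟨fun x => absurd x.2.2 (lt_irrefl 0)⟩
            exact Nat.card_of_isEmpty
          have hGn : Nat.card {t : List Step // IsDyckN n t ∧ 0 < n} =
              Nat.card {t : List Step // IsDyckN n t} :=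
            Nat.card_congr (Equiv.subtypeEquivRight fun t => by simp [hn])
          have hE0 : Nat.card {s : List Step // IsDyckN (n - n) s ∧ Even (termDesc s)} = 1 := by
            rw [show n - n = 0 by omega]
            exact card_zero _ (by simp [termDesc])
          have hH0 : Nat.card {s : List Step // IsDyckN (n - n) s ∧ HillFree s} = 1 := by
            rw [show n - n = 0 by omega]
            exact card_zero _ hillFree_nil
          rw [hF0, hFn, hG0, hGn, hE0, hH0, Nat.sub_zero]
          have := card_split n
          omega
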